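/- If F : C ⥤ X is a special weak bifibration between categories with pullbacks that preserves pullbacks and reflects monomorphisms, then a morphism m in C is a pullback stable essential monomorphism if and only if F(m) is a pullback stable essential monomorphism in X. -/

import Mathlib

open CategoryTheory Limits

/-- A morphism `m` is an essential monomorphism if it is a monomorphism and every
morphism `f` such that `m ≫ f` is a monomorphism is itself a monomorphism. -/
def IsEssentialMono {C : Type*} [CategoryTheory.Category C] {S A : C} (m : S ⟶ A) : Prop :=
  CategoryTheory.Mono m ∧
    ∀ ⦃B : C⦄ (f : A ⟶ B), CategoryTheory.Mono (m ≫ f) → CategoryTheory.Mono f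

/-- A morphism `m : S ⟶ A` is a pullback stable essential monomorphism if for every
morphism `u : X ⟶ A` the pullback projection `S ×_A X ⟶ X` of `m` along `u` is an
essential monomorphism. -/
def IsStableEssentialMono {C : Type*} [CategoryTheory.Category C]
    [CategoryTheory.Limits.HasPullbacks C] {S A : C} (m : S ⟶ A) : Prop :=
  ∀ ⦃X : C⦄ (u : X ⟶ A), IsEssentialMono (CategoryTheory.Limits.pullback.snd m u)

/-- A functor `F : C ⥤ X` is a special weak fibration if for every object `c` of `C` and
every morphism `u : x ⟶ F c` there exist `f : U ⟶ c` in `C` and an isomorphism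
`φ : F U ≅ x` with `F f = φ.hom ≫ u`. -/
def IsSpecialWeakFibration {C : Type*} [Category C] {X : Type*} [Category X]
    (F : C ⥤ X) : Prop :=
  ∀ (c : C) ⦃x : X⦄ (u : x ⟶ F.obj c), ∃ (U : C) (f : U ⟶ c) (φ : F.obj U ≅ x),
    F.map f = φ.hom ≫ u

/-- A functor `F : C ⥤ X` is a weak opfibration if for every object `c` of `C` and every
morphism `v : F c ⟶ y` there exist `g : c ⟶ V` in `C` and a monomorphism `ψ : y ⟶ F V`
with `F g = v ≫ ψ`. -/
def IsWeakOpfibration {C : Type*} [Category C] {X : Type*} [Category X] (F : C ⥤ X) : Prop :=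
  ∀ (c : C) ⦃y : X⦄ (v : F.obj c ⟶ y), ∃ (V : C) (g : c ⟶ V) (ψ : y ⟶ F.obj V),
    Mono ψ ∧ F.map g = v ≫ ψ

/-- A functor is a special weak bifibration if it is both a special weak fibration and a
weak opfibration. -/
def IsSpecialWeakBifibration {C : Type*} [Category C] {X : Type*} [Category X]
    (F : C ⥤ X) : Prop :=
  IsSpecialWeakFibration F ∧ IsWeakOpfibration F


section Aux

variable {C : Type*} [Category C]

lemma IsEssentialMono.comp_iso_left {P' P A : C} (e : P' ⟶ P) [IsIso e] {p : P ⟶ A}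
    (h : IsEssentialMono p) : IsEssentialMono (e ≫ p) := by
  haveI := h.1
  refine ⟨mono_comp _ _, fun B f hf => ?_⟩
  have hpf : Mono (p ≫ f) := by
    have : p ≫ f = inv e ≫ ((e ≫ p) ≫ f) := by simp
    rw [this]; exact mono_comp _ _
  exact h.2 f hpf

lemma IsEssentialMono.comp_iso_right {P A A' : C} {p : P ⟶ A} (w : A ⟶ A') [IsIso w]
    (h : IsEssentialMono p) : IsEssentialMono (p ≫ w) := by
  haveI := h.1
  refine ⟨mono_comp _ _, fun B f hf => ?_⟩
  rw [Category.assoc] at hf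
  have hwf : Mono (w ≫ f) := h.2 _ hf
  have : f = inv w ≫ (w ≫ f) := by simp
  rw [this]; exact mono_comp _ _

variable {X : Type*} [Category X] (F : C ⥤ X)

lemma isEssentialMono_map_of_weakOpfibration [F.PreservesMonomorphisms]
    [F.ReflectsMonomorphisms] (hop : IsWeakOpfibration F) {P U : C} {p : P ⟶ U}
    (h : IsEssentialMono p) : IsEssentialMono (F.map p) := by
  haveI := h.1
  refine ⟨F.map_mono p, fun B g hg => ?_⟩
  obtain ⟨V, hmor, ψ, hψ, hFh⟩ := hop U g
  have h1 : Mono (F.map (p ≫ hmor)) := by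
    rw [F.map_comp, hFh, ← Category.assoc]
    exact mono_comp _ _
  have h2 : Mono (p ≫ hmor) := F.mono_of_mono_map h1
  have h3 : Mono hmor := h.2 _ h2
  have h4 : Mono (g ≫ ψ) := by rw [← hFh]; exact F.map_mono hmor
  exact mono_of_mono g ψ

lemma isEssentialMono_of_map [F.PreservesMonomorphisms] [F.ReflectsMonomorphisms]
    {P U : C} {p : P ⟶ U} (h : IsEssentialMono (F.map p)) : IsEssentialMono p := by
  refine ⟨F.mono_of_mono_map h.1, fun B f hf => ?_⟩
  have : Mono (F.map p ≫ F.map f) := by rw [← F.map_comp]; exact F.map_mono _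
  exact F.mono_of_mono_map (h.2 _ this)

end Aux

/-- If `F` is a special weak bifibration that preserves pullbacks and reflects
monomorphisms, then `m` is a pullback stable essential monomorphism iff `F.map m` is. -/
theorem stableEssentialMono_iff_of_specialWeakBifibration {C : Type*} [Category C]
    {X : Type*} [Category X] [HasPullbacks C] [HasPullbacks X] (F : C ⥤ X)
    [PreservesLimitsOfShape WalkingCospan F] [F.ReflectsMonomorphisms]
    (hF : IsSpecialWeakBifibration F) {S A : C} (m : S ⟶ A) :
    IsStableEssentialMono m ↔ IsStableEssentialMono (F.map m) := by

  haveI : F.PreservesMonomorphisms := inferInstance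
  constructor
  · intro hm Y u
    obtain ⟨U, f, φ, hφ⟩ := hF.1 A u
    let β : pullback (F.map m) u ⟶ pullback (F.map m) (F.map f) :=
      pullback.lift (pullback.fst _ _) (pullback.snd _ _ ≫ φ.inv) (by
        rw [hφ, Category.assoc, Iso.inv_hom_id_assoc, pullback.condition])
    let α : pullback (F.map m) (F.map f) ⟶ pullback (F.map m) u :=
      pullback.lift (pullback.fst _ _) (pullback.snd _ _ ≫ φ.hom) (by
        rw [Category.assoc, ← hφ, pullback.condition])
    have hβ1 : β ≫ pullback.fst _ _ = pullback.fst (F.map m) u := pullback.lift_fst _ _ _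
    have hβ2 : β ≫ pullback.snd _ _ = pullback.snd (F.map m) u ≫ φ.inv := pullback.lift_snd _ _ _
    have hα1 : α ≫ pullback.fst _ _ = pullback.fst (F.map m) (F.map f) := pullback.lift_fst _ _ _
    have hα2 : α ≫ pullback.snd _ _ = pullback.snd (F.map m) (F.map f) ≫ φ.hom :=
      pullback.lift_snd _ _ _
    haveI : IsIso β := by
      refine ⟨α, ?_, ?_⟩ <;> apply pullback.hom_ext <;> simp [reassoc_of% hα1, reassoc_of% hα2, reassoc_of% hβ1, reassoc_of% hβ2, hα1, hα2, hβ1, hβ2]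
    have key : pullback.snd (F.map m) u =
        (β ≫ (PreservesPullback.iso F m f).inv) ≫ (F.map (pullback.snd m f) ≫ φ.hom) := by
      rw [Category.assoc, PreservesPullback.iso_inv_snd_assoc]
      simp [reassoc_of% hβ2]
    rw [key]
    exact ((isEssentialMono_map_of_weakOpfibration F hF.2 (hm f)).comp_iso_right
      φ.hom).comp_iso_left _
  · intro hm Y u
    apply isEssentialMono_of_map F
    rw [← PreservesPullback.iso_hom_snd]
    exact (hm (F.map u)).comp_iso_left _
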